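/- For n ∈ ℕ, n ≥ 1, let Γₙ = {(n²a, b/n) : a, b ∈ ℤ} ⊆ ℝ². Then each Γₙ is a cocompact lattice in the additive group ℝ² with covolume vol(Γₙ\ℝ²) = n, so the covolumes tend to infinity; nevertheless (Γₙ) is not BS-convergent to {0}: for the compact set C = [−1,1]² one has (0, 1/n) ∈ (Γₙ ∖ {0}) ∩ C for every n ≥ 1, and since ℝ² is abelian, x + (Γₙ ∖ {0}) − x = Γₙ ∖ {0} for every x, so P_{Γₙ\ℝ²}({x ∈ Γₙ\ℝ² : (x + (Γₙ ∖ {0}) − x) ∩ C ≠ ∅}) = 1 for all n ≥ 1; in particular this probability does not tend to 0. -/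

import Mathlib

open MeasureTheory Filter Topology Set
open scoped ENNReal

/-- The lattice `Γₙ = n²ℤ × (1/n)ℤ ⊆ ℝ²`. -/
def Gam (n : ℕ) : AddSubgroup (ℝ × ℝ) where
  carrier := {p | ∃ a b : ℤ, p = ((n : ℝ) ^ 2 * (a : ℝ), (b : ℝ) / (n : ℝ))}
  zero_mem' := ⟨0, 0, by simp [Prod.ext_iff]⟩
  add_mem' := by
    rintro p q ⟨a, b, rfl⟩ ⟨c, d, rfl⟩
    refine ⟨a + c, b + d, Prod.ext ?_ ?_⟩ <;>
      simp only [Prod.fst_add, Prod.snd_add] <;> push_cast <;> ring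
  neg_mem' := by
    rintro p ⟨a, b, rfl⟩
    refine ⟨-a, -b, Prod.ext ?_ ?_⟩ <;>
      simp only [Prod.fst_neg, Prod.snd_neg] <;> push_cast <;> ring

lemma euProd {P Q : ℤ → Prop} (hP : ∃! a, P a) (hQ : ∃! b, Q b) :
    ∃! p : ℤ × ℤ, P p.1 ∧ Q p.2 := by
  obtain ⟨a, ha, ha'⟩ := hP
  obtain ⟨b, hb, hb'⟩ := hQ
  exact ⟨(a, b), ⟨ha, hb⟩, fun p ⟨h1, h2⟩ => Prod.ext (ha' _ h1) (hb' _ h2)⟩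

lemma gamE (n : ℕ) (hn : 1 ≤ n) :
    ∃ e : ℤ × ℤ → ↥(Gam n), Function.Bijective e ∧
      ∀ p : ℤ × ℤ, (e p : ℝ × ℝ) = ((n : ℝ) ^ 2 * p.1, (p.2 : ℝ) / n) := by
  have hn0 : (n : ℝ) ≠ 0 := by positivity
  refine ⟨fun p => ⟨((n : ℝ) ^ 2 * p.1, (p.2 : ℝ) / n), ⟨p.1, p.2, rfl⟩⟩, ⟨?_, ?_⟩, fun _ => rfl⟩
  · intro p q h
    simp only [Subtype.mk.injEq, Prod.mk.injEq] at h
    have h1 : (p.1 : ℝ) = q.1 := by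
      have : (n:ℝ)^2 * p.1 = (n:ℝ)^2 * q.1 := congrArg (fun z => (Subtype.val z).1) h
      field_simp at this
      exact_mod_cast this
    have h2 : (p.2 : ℝ) = q.2 := by
      have : (p.2:ℝ) / n = (q.2:ℝ) / n := congrArg (fun z => (Subtype.val z).2) h
      field_simp at this
      exact_mod_cast this
    exact Prod.ext (by exact_mod_cast h1) (by exact_mod_cast h2)
  · rintro ⟨p, a, b, rfl⟩
    exact ⟨(a, b), rfl⟩

lemma existsUnique_vadd (n : ℕ) (hn : 1 ≤ n) (x : ℝ × ℝ) :
    ∃! g : ↥(Gam n), g +ᵥ x ∈ (Ioc (0:ℝ) ((n:ℝ)^2)) ×ˢ (Ioc (0:ℝ) ((n:ℝ)⁻¹)) := by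
  have hn0 : (0 : ℝ) < n := by exact_mod_cast hn
  have hn0' : (n : ℝ) ≠ 0 := ne_of_gt hn0
  obtain ⟨e, he, heval⟩ := gamE n hn
  refine he.existsUnique_iff.mpr ?_
  have key : ∀ q : ℤ × ℤ, (e q +ᵥ x ∈ (Ioc (0:ℝ) ((n:ℝ)^2)) ×ˢ (Ioc (0:ℝ) ((n:ℝ)⁻¹))) ↔
      ((n:ℝ)^2 * q.1 + x.1 ∈ Ioc (0:ℝ) ((n:ℝ)^2) ∧ (q.2:ℝ)/n + x.2 ∈ Ioc (0:ℝ) ((n:ℝ)⁻¹)) := by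
    intro q
    rw [AddSubgroup.vadd_def, heval, Set.mem_prod, vadd_eq_add]
    simp only [Prod.fst_add, Prod.snd_add]
  refine (existsUnique_congr key).mpr
    (euProd (P := fun a : ℤ => (n:ℝ)^2*a + x.1 ∈ Ioc (0:ℝ) ((n:ℝ)^2))
      (Q := fun b : ℤ => (b:ℝ)/n + x.2 ∈ Ioc (0:ℝ) ((n:ℝ)⁻¹)) ?_ ?_)
  · have hT : (0:ℝ) < (n:ℝ)^2 := by positivity
    refine (existsUnique_congr fun a => ?_).mp (existsUnique_add_zsmul_mem_Ioc hT x.1 0)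
    have h1 : x.1 + a • ((n:ℝ)^2) = (n:ℝ)^2 * a + x.1 := by rw [zsmul_eq_mul]; ring
    rw [h1, zero_add]
  · have hT : (0:ℝ) < (n:ℝ)⁻¹ := by positivity
    refine (existsUnique_congr fun b => ?_).mp (existsUnique_add_zsmul_mem_Ioc hT x.2 0)
    have h1 : x.2 + b • ((n:ℝ)⁻¹) = (b:ℝ)/n + x.2 := by rw [zsmul_eq_mul]; field_simp; ring
    rw [h1, zero_add]

lemma gam_discrete (n : ℕ) (hn : 1 ≤ n) : DiscreteTopology ↥(Gam n) := by
  have hn0 : (0:ℝ) < n := by exact_mod_cast hn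
  have hn1 : (1:ℝ) ≤ n := by exact_mod_cast hn
  rw [discreteTopology_iff_isOpen_singleton_zero]
  set r : ℝ := min ((n:ℝ)^2) ((n:ℝ)⁻¹) with hr
  have hrpos : 0 < r := lt_min (by positivity) (by positivity)
  have : ({0} : Set ↥(Gam n)) = (Subtype.val) ⁻¹' (Metric.ball (0:ℝ×ℝ) r) := by
    ext ⟨g, a, b, hg⟩
    simp only [Set.mem_singleton_iff, Set.mem_preimage, mem_ball_zero_iff]
    constructor
    · intro h
      have hgz : g = (0:ℝ×ℝ) := by simpa using Subtype.ext_iff.mp h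
      rw [hgz]; simpa using hrpos
    · intro h
      rw [Prod.norm_def] at h
      subst hg
      have h1 : (n:ℝ)^2 * |(a:ℝ)| < r := by
        simpa [Real.norm_eq_abs] using lt_of_le_of_lt (le_max_left _ _) h
      have h2 : |(b:ℝ)| / n < r := by
        simpa [Real.norm_eq_abs] using lt_of_le_of_lt (le_max_right _ _) h
      have ha : a = 0 := by
        by_contra ha
        have : (1:ℝ) ≤ |(a:ℝ)| := by
          rw [← Int.cast_abs]; exact_mod_cast Int.one_le_abs ha
        have : (n:ℝ)^2 ≤ (n:ℝ)^2 * |(a:ℝ)| := by nlinarith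
        exact absurd (lt_of_le_of_lt this h1) (not_lt.mpr (min_le_left _ _))
      have hb : b = 0 := by
        by_contra hb
        have h1b : (1:ℝ) ≤ |(b:ℝ)| := by
          rw [← Int.cast_abs]; exact_mod_cast Int.one_le_abs hb
        have : (n:ℝ)⁻¹ ≤ |(b:ℝ)| / n := by
          rw [div_eq_mul_inv]
          nth_rewrite 1 [← one_mul ((n:ℝ)⁻¹)]
          exact mul_le_mul_of_nonneg_right h1b (by positivity)
        exact absurd (lt_of_le_of_lt this h2) (not_lt.mpr (min_le_right _ _))
      subst ha; subst hb
      simp [Prod.ext_iff]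
  rw [this]
  exact Metric.isOpen_ball.preimage continuous_subtype_val

lemma gam_fd (n : ℕ) (hn : 1 ≤ n) :
    IsAddFundamentalDomain ↥(Gam n) ((Ioc (0:ℝ) ((n:ℝ)^2)) ×ˢ (Ioc (0:ℝ) ((n:ℝ)⁻¹))) volume :=
  IsAddFundamentalDomain.mk' (measurableSet_Ioc.prod measurableSet_Ioc).nullMeasurableSet
    (existsUnique_vadd n hn)

lemma gam_vol (n : ℕ) (hn : 1 ≤ n) :
    volume ((Ioc (0:ℝ) ((n:ℝ)^2)) ×ˢ (Ioc (0:ℝ) ((n:ℝ)⁻¹))) = (n : ℝ≥0∞) := by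
  have hn0 : (0:ℝ) < n := by exact_mod_cast hn
  rw [Measure.volume_eq_prod, Measure.prod_prod, Real.volume_Ioc,
    Real.volume_Ioc, sub_zero, sub_zero, ← ENNReal.ofReal_mul (by positivity)]
  have : (n:ℝ)^2 * (n:ℝ)⁻¹ = (n:ℝ) := by field_simp
  rw [this, ENNReal.ofReal_natCast]

lemma gam_cocompact (n : ℕ) (hn : 1 ≤ n) : CompactSpace ((ℝ × ℝ) ⧸ Gam n) := by
  refine ⟨?_⟩
  have hsurj : (Set.univ : Set ((ℝ×ℝ) ⧸ Gam n)) =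
      (QuotientAddGroup.mk : ℝ×ℝ → (ℝ×ℝ) ⧸ Gam n) ''
        (Icc ((0:ℝ),(0:ℝ)) ((n:ℝ)^2, (n:ℝ)⁻¹)) := by
    refine Set.eq_of_subset_of_subset ?_ (Set.subset_univ _)
    rintro q -
    obtain ⟨x, rfl⟩ := QuotientAddGroup.mk_surjective q
    obtain ⟨g, hg, -⟩ := existsUnique_vadd n hn x
    rw [AddSubgroup.vadd_def, Set.mem_prod] at hg
    refine ⟨(g:ℝ×ℝ) + x, ?_, ?_⟩
    · constructor
      · exact ⟨hg.1.1.le, hg.2.1.le⟩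
      · exact ⟨hg.1.2, hg.2.2⟩
    · rw [QuotientAddGroup.eq]
      simpa using neg_mem g.2
  rw [hsurj]
  exact isCompact_Icc.image continuous_quotient_mk'

lemma gam_mem (n : ℕ) (hn : 1 ≤ n) :
    ((0, 1 / n) : ℝ × ℝ) ∈ Gam n ∧ ((0, 1 / n) : ℝ × ℝ) ≠ 0 ∧
      ((0, 1 / n) : ℝ × ℝ) ∈ Set.Icc ((-1, -1) : ℝ × ℝ) (1, 1) := by
  have hn0 : (0:ℝ) < n := by exact_mod_cast hn
  have hn1 : (1:ℝ) ≤ n := by exact_mod_cast hn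
  refine ⟨⟨0, 1, by simp [one_div]⟩, ?_, ?_⟩
  · intro h
    have : (1:ℝ)/n = 0 := congrArg Prod.snd h
    have h0 : (0:ℝ) < 1/n := by positivity
    linarith
  · have hpos : (0:ℝ) < 1/n := by positivity
    have hle : (1:ℝ)/n ≤ 1 := by rw [div_le_one hn0]; linarith
    rw [Set.mem_Icc]
    exact ⟨⟨by norm_num, by simp only; linarith⟩, ⟨by norm_num, by simp only; linarith⟩⟩

lemma gam_img (n : ℕ) (x : ℝ × ℝ) :
    (fun y => x + y - x) '' ((Gam n : Set (ℝ × ℝ)) \ {0}) = (Gam n : Set (ℝ × ℝ)) \ {0} := by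
  have : (fun y : ℝ×ℝ => x + y - x) = id := by
    funext y; simp [add_sub_cancel_left]
  rw [this, Set.image_id]

lemma gam_prob (n : ℕ) (hn : 1 ≤ n) (P : Measure ((ℝ × ℝ) ⧸ Gam n))
    (hP : IsProbabilityMeasure P) :
    P {q | ∃ x : ℝ × ℝ, (x : (ℝ × ℝ) ⧸ Gam n) = q ∧
      (((fun y => x + y - x) '' ((Gam n : Set (ℝ × ℝ)) \ {0})) ∩
        Set.Icc ((-1, -1) : ℝ × ℝ) (1, 1)).Nonempty} = 1 := by
  have huniv : {q : (ℝ × ℝ) ⧸ Gam n | ∃ x : ℝ × ℝ, (x : (ℝ × ℝ) ⧸ Gam n) = q ∧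
      (((fun y => x + y - x) '' ((Gam n : Set (ℝ × ℝ)) \ {0})) ∩
        Set.Icc ((-1, -1) : ℝ × ℝ) (1, 1)).Nonempty} = Set.univ := by
    refine Set.eq_univ_of_forall fun q => ?_
    obtain ⟨x, rfl⟩ := QuotientAddGroup.mk_surjective q
    obtain ⟨h1, h2, h3⟩ := gam_mem n hn
    exact ⟨x, rfl, ⟨((0, 1/n) : ℝ×ℝ), by rw [gam_img]; exact ⟨h1, h2⟩, h3⟩⟩
  rw [huniv]
  exact measure_univ


/-- the example in Section 1.  The lattices `Γₙ = n²ℤ × (1/n)ℤ` in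
`ℝ²` are discrete and cocompact with covolume `n` (so the covolumes tend to infinity),
yet `(Γₙ)` is not BS-convergent to `{0}`: with `C = [-1,1]²` one has
`(0,1/n) ∈ (Γₙ∖{0}) ∩ C`, by commutativity `x + (Γₙ∖{0}) - x = Γₙ∖{0}`, hence the
BS-probability equals `1` for all `n ≥ 1` and does not tend to `0`. -/
theorem stmt15 :
    (∀ n : ℕ, 1 ≤ n → DiscreteTopology ↥(Gam n)) ∧
    (∀ n : ℕ, 1 ≤ n → CompactSpace ((ℝ × ℝ) ⧸ Gam n)) ∧
    (∀ n : ℕ, 1 ≤ n → ∃ F : Set (ℝ × ℝ),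
      IsAddFundamentalDomain ↥(Gam n) F volume ∧ volume F = (n : ℝ≥0∞)) ∧
    Tendsto (fun n : ℕ => (n : ℝ≥0∞)) atTop (𝓝 ⊤) ∧
    (∀ n : ℕ, 1 ≤ n →
      ((0, 1 / n) : ℝ × ℝ) ∈ Gam n ∧ ((0, 1 / n) : ℝ × ℝ) ≠ 0 ∧
      ((0, 1 / n) : ℝ × ℝ) ∈ Set.Icc ((-1, -1) : ℝ × ℝ) (1, 1)) ∧
    (∀ (n : ℕ) (x : ℝ × ℝ),
      (fun y => x + y - x) '' ((Gam n : Set (ℝ × ℝ)) \ {0}) =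
        (Gam n : Set (ℝ × ℝ)) \ {0}) ∧
    (∀ n : ℕ, 1 ≤ n → ∀ P : Measure ((ℝ × ℝ) ⧸ Gam n), IsProbabilityMeasure P →
      P {q | ∃ x : ℝ × ℝ, (x : (ℝ × ℝ) ⧸ Gam n) = q ∧
        (((fun y => x + y - x) '' ((Gam n : Set (ℝ × ℝ)) \ {0})) ∩
          Set.Icc ((-1, -1) : ℝ × ℝ) (1, 1)).Nonempty} = 1) ∧
    (∀ P : (n : ℕ) → Measure ((ℝ × ℝ) ⧸ Gam n),
      (∀ n : ℕ, 1 ≤ n → IsProbabilityMeasure (P n)) →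
      ¬ Tendsto (fun n : ℕ => P n {q | ∃ x : ℝ × ℝ, (x : (ℝ × ℝ) ⧸ Gam n) = q ∧
          (((fun y => x + y - x) '' ((Gam n : Set (ℝ × ℝ)) \ {0})) ∩
            Set.Icc ((-1, -1) : ℝ × ℝ) (1, 1)).Nonempty})
        atTop (𝓝 0)) := by
  refine ⟨gam_discrete, gam_cocompact, fun n hn => ⟨_, gam_fd n hn, gam_vol n hn⟩,
    ENNReal.tendsto_nat_nhds_top, gam_mem, gam_img, gam_prob, ?_⟩
  intro P hP h
  have heq : (fun n : ℕ => P n {q | ∃ x : ℝ × ℝ, (x : (ℝ × ℝ) ⧸ Gam n) = q ∧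
      (((fun y => x + y - x) '' ((Gam n : Set (ℝ × ℝ)) \ {0})) ∩
        Set.Icc ((-1, -1) : ℝ × ℝ) (1, 1)).Nonempty}) =ᶠ[atTop] (fun _ => (1 : ℝ≥0∞)) :=
    Filter.eventually_atTop.mpr ⟨1, fun n hn => gam_prob n hn (P n) (hP n hn)⟩
  have h1 : Tendsto (fun _ : ℕ => (1 : ℝ≥0∞)) atTop (𝓝 0) := h.congr' heq
  exact absurd (tendsto_nhds_unique tendsto_const_nhds h1) (by simp)
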